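/- Let d, n ≥ 1 and let Γ, Γ̂ : ℤ → (d×d real matrices) both satisfy the symmetry condition Γ(−h) = Γ(h)ᵀ and Γ̂(−h) = Γ̂(h)ᵀ. Let M and M̂ be the corresponding dn×dn block Toeplitz matrices with (s,t) blocks Γ(t−s) and Γ̂(t−s) respectively. Then ‖M̂ − M‖_op ≤ Σ_{h=−(n−1)}^{n−1} |Γ̂(h) − Γ(h)|₁, where ‖·‖_op is the spectral operator norm and |·|₁ the entrywise ℓ¹ norm. -/
import Mathlib


open Matrix Finset

/-- The `ℓ² → ℓ²` (spectral) operator norm of a real square matrix. -/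
noncomputable def l2OpNorm {m : Type*} [Fintype m] [DecidableEq m]
    (A : Matrix m m ℝ) : ℝ :=
  ‖(Matrix.toEuclideanCLM (𝕜 := ℝ) (n := m) A :
      EuclideanSpace ℝ m →L[ℝ] EuclideanSpace ℝ m)‖

/-- The entrywise `ℓ¹` norm `|B|₁ = ∑_{i,j} |B i j|` of a real matrix. -/
noncomputable def entryL1 {d : ℕ} (B : Matrix (Fin d) (Fin d) ℝ) : ℝ :=
  ∑ i, ∑ j, |B i j|

/-- The `dn × dn` block Toeplitz matrix built from the `d × d` blocks `Γ h`, with the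
block `Γ (t - s)` in block position `(s, t)`. -/
def blockToeplitz {d : ℕ} (Γ : ℤ → Matrix (Fin d) (Fin d) ℝ) (n : ℕ) :
    Matrix (Fin n × Fin d) (Fin n × Fin d) ℝ :=
  fun p q => Γ ((q.1 : ℤ) - (p.1 : ℤ)) p.2 q.2

/-- Schur test: the spectral norm is bounded by `S` if all row and column ℓ¹-sums are. -/
lemma schur_test {m : Type*} [Fintype m] [DecidableEq m] (A : Matrix m m ℝ) (S : ℝ)
    (hS : 0 ≤ S) (hrow : ∀ i, ∑ j, |A i j| ≤ S) (hcol : ∀ j, ∑ i, |A i j| ≤ S) :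
    l2OpNorm A ≤ S := by
  refine ContinuousLinearMap.opNorm_le_bound _ hS (fun x => ?_)
  set y : EuclideanSpace ℝ m := toEuclideanCLM (𝕜 := ℝ) (n := m) A x with hy
  have hyp : ∀ p, y p = ∑ q, A p q * x q := by
    intro p
    have : (WithLp.equiv 2 (m → ℝ)) y = Matrix.toLin' A ((WithLp.equiv 2 (m → ℝ)) x) := by
      simp [hy]
    have := congrFun this p
    simpa [Matrix.toLin'_apply, Matrix.mulVec, dotProduct] using this
  have hnx : ‖x‖ ^ 2 = ∑ q, (x q) ^ 2 := by
    rw [EuclideanSpace.norm_eq, Real.sq_sqrt (by positivity)]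
    simp [sq_abs]
  have hny : ‖y‖ ^ 2 = ∑ p, (y p) ^ 2 := by
    rw [EuclideanSpace.norm_eq, Real.sq_sqrt (by positivity)]
    simp [sq_abs]
  have key : ‖y‖ ^ 2 ≤ (S * ‖x‖) ^ 2 := by
    rw [hny]
    have step1 : ∀ p, (y p) ^ 2 ≤ (∑ q, |A p q|) * (∑ q, |A p q| * (x q) ^ 2) := by
      intro p
      have h1 : (y p) ^ 2 ≤ (∑ q, |A p q| * |x q|) ^ 2 := by
        rw [hyp]
        have := Finset.abs_sum_le_sum_abs (fun q => A p q * x q) Finset.univ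
        calc (∑ q, A p q * x q) ^ 2 = |∑ q, A p q * x q| ^ 2 := (sq_abs _).symm
          _ ≤ (∑ q, |A p q * x q|) ^ 2 := by
              apply pow_le_pow_left₀ (abs_nonneg _) this
          _ = (∑ q, |A p q| * |x q|) ^ 2 := by simp [abs_mul]
      refine h1.trans ?_
      have := Finset.sum_mul_sq_le_sq_mul_sq Finset.univ
        (fun q => Real.sqrt |A p q|) (fun q => Real.sqrt |A p q| * |x q|)
      calc (∑ q, |A p q| * |x q|) ^ 2
          = (∑ q, Real.sqrt |A p q| * (Real.sqrt |A p q| * |x q|)) ^ 2 := by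
            congr 1; apply Finset.sum_congr rfl; intro q _
            rw [← mul_assoc, Real.mul_self_sqrt (abs_nonneg _)]
        _ ≤ (∑ q, Real.sqrt |A p q| ^ 2) * (∑ q, (Real.sqrt |A p q| * |x q|) ^ 2) := this
        _ = (∑ q, |A p q|) * (∑ q, |A p q| * (x q) ^ 2) := by
            congr 1
            · apply Finset.sum_congr rfl; intro q _; exact Real.sq_sqrt (abs_nonneg _)
            · apply Finset.sum_congr rfl; intro q _
              rw [mul_pow, Real.sq_sqrt (abs_nonneg _), sq_abs]
    calc ∑ p, (y p) ^ 2
        ≤ ∑ p, (∑ q, |A p q|) * (∑ q, |A p q| * (x q) ^ 2) :=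
          Finset.sum_le_sum (fun p _ => step1 p)
      _ ≤ ∑ p, S * (∑ q, |A p q| * (x q) ^ 2) := by
          refine Finset.sum_le_sum (fun p _ => ?_)
          apply mul_le_mul_of_nonneg_right (hrow p)
          positivity
      _ = S * ∑ q, (∑ p, |A p q|) * (x q) ^ 2 := by
          rw [← Finset.mul_sum, Finset.sum_comm]
          congr 1; apply Finset.sum_congr rfl; intro q _
          rw [Finset.sum_mul]
      _ ≤ S * ∑ q, S * (x q) ^ 2 := by
          apply mul_le_mul_of_nonneg_left _ hS
          refine Finset.sum_le_sum (fun q _ => ?_)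
          apply mul_le_mul_of_nonneg_right (hcol q)
          positivity
      _ = (S * ‖x‖) ^ 2 := by
          rw [← Finset.mul_sum, ← hnx]; ring
  exact le_of_pow_le_pow_left₀ two_ne_zero (by positivity) key

/-- Summing a nonnegative function over lags realized by an injective map into the lag window. -/
lemma lag_sum_le (n : ℕ) (F : ℤ → ℝ) (hF : ∀ h, 0 ≤ F h) (φ : Fin n → ℤ)
    (hφ : Function.Injective φ)
    (hrange : ∀ t, φ t ∈ Finset.Icc (-((n : ℤ) - 1)) ((n : ℤ) - 1)) :
    ∑ t, F (φ t) ≤ ∑ h ∈ Finset.Icc (-((n : ℤ) - 1)) ((n : ℤ) - 1), F h := by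
  rw [← Finset.sum_image (f := F) (g := φ) (fun a _ b _ hab => hφ hab)]
  apply Finset.sum_le_sum_of_subset_of_nonneg
  · intro h hh
    obtain ⟨t, _, rfl⟩ := Finset.mem_image.mp hh
    exact hrange t
  · intro h _ _; exact hF h

/-- The operator-norm error between two symmetric block Toeplitz matrices is controlled
by the sum over all lags of the entrywise `ℓ¹` errors of the corresponding blocks. -/
theorem blockToeplitz_diff_opNorm_le (d n : ℕ) (hd : 1 ≤ d) (hn : 1 ≤ n)
    (Γ Γhat : ℤ → Matrix (Fin d) (Fin d) ℝ)
    (hΓ : ∀ h : ℤ, Γ (-h) = (Γ h)ᵀ) (hΓhat : ∀ h : ℤ, Γhat (-h) = (Γhat h)ᵀ) :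
    l2OpNorm (blockToeplitz Γhat n - blockToeplitz Γ n) ≤
      ∑ h ∈ Finset.Icc (-((n : ℤ) - 1)) ((n : ℤ) - 1), entryL1 (Γhat h - Γ h) := by
  set Δ : ℤ → Matrix (Fin d) (Fin d) ℝ := fun h => Γhat h - Γ h with hΔ
  set S : ℝ := ∑ h ∈ Finset.Icc (-((n : ℤ) - 1)) ((n : ℤ) - 1), entryL1 (Δ h) with hSdef
  have hL1nonneg : ∀ h, 0 ≤ entryL1 (Δ h) := by
    intro h; unfold entryL1; positivity
  have hS : 0 ≤ S := Finset.sum_nonneg (fun h _ => hL1nonneg h)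
  have hA : blockToeplitz Γhat n - blockToeplitz Γ n =
      fun p q : Fin n × Fin d => Δ ((q.1 : ℤ) - (p.1 : ℤ)) p.2 q.2 := by
    funext p q
    simp [blockToeplitz, hΔ, Matrix.sub_apply]
  have hmem : ∀ t s : Fin n, ((t : ℤ) - (s : ℤ)) ∈
      Finset.Icc (-((n : ℤ) - 1)) ((n : ℤ) - 1) := by
    intro t s
    have ht := t.isLt
    have hs := s.isLt
    rw [Finset.mem_Icc]
    omega
  apply schur_test _ S hS
  · -- row sums
    rintro ⟨s, i⟩
    rw [hA]
    rw [Fintype.sum_prod_type]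
    have : ∀ t : Fin n, (∑ j, |Δ ((t : ℤ) - (s : ℤ)) i j|) ≤ 0 + (∑ j, |Δ ((t : ℤ) - (s : ℤ)) i j|) := by
      intro t; simp
    calc ∑ t : Fin n, ∑ j, |Δ ((t : ℤ) - (s : ℤ)) i j|
        ≤ ∑ h ∈ Finset.Icc (-((n : ℤ) - 1)) ((n : ℤ) - 1), ∑ j, |Δ h i j| := by
          apply lag_sum_le n (fun h => ∑ j, |Δ h i j|) (fun h => by positivity)
            (fun t => (t : ℤ) - (s : ℤ))
          · intro a b hab
            dsimp only at hab
            have : (a : ℤ) = b := by omega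
            exact Fin.ext (by exact_mod_cast this)
          · exact fun t => hmem t s
      _ ≤ S := by
          apply Finset.sum_le_sum
          intro h _
          unfold entryL1
          exact Finset.single_le_sum (f := fun i' => ∑ j, |Δ h i' j|)
            (fun i' _ => by positivity) (Finset.mem_univ i)
  · -- column sums
    rintro ⟨t, j⟩
    rw [hA]
    rw [Fintype.sum_prod_type]
    calc ∑ s : Fin n, ∑ i, |Δ ((t : ℤ) - (s : ℤ)) i j|
        ≤ ∑ h ∈ Finset.Icc (-((n : ℤ) - 1)) ((n : ℤ) - 1), ∑ i, |Δ h i j| := by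
          apply lag_sum_le n (fun h => ∑ i, |Δ h i j|) (fun h => by positivity)
            (fun s => (t : ℤ) - (s : ℤ))
          · intro a b hab
            dsimp only at hab
            have : (a : ℤ) = b := by omega
            exact Fin.ext (by exact_mod_cast this)
          · exact fun s => hmem t s
      _ ≤ S := by
          apply Finset.sum_le_sum
          intro h _
          unfold entryL1
          have : ∑ i, |Δ h i j| ≤ ∑ i, ∑ j', |Δ h i j'| := by
            apply Finset.sum_le_sum
            intro i _
            exact Finset.single_le_sum (f := fun j' => |Δ h i j'|)
              (fun j' _ => by positivity) (Finset.mem_univ j)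
          exact this
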